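/- Let S be a dual weak brace such that the quotient S/Soc(S) is right nilpotent, i.e., (S/Soc(S))^(m) = E(S/Soc(S)) for some m ≥ 1, where the ideals S^(n) are defined by S^(1) = S and S^(n+1) = S^(n) · S (the additive inverse subsemigroup generated by elements x · s with x ∈ S^(n), s ∈ S). Then S itself is right nilpotent: S^(m+1) ⊆ E(S). -/
import Mathlib


/-- A weak brace: `(S,+)` and `(S,∘)` are inverse semigroups satisfying
`a ∘ (b + c) = a ∘ b - a + a ∘ c` and `a ∘ a⁻ = -a + a`. -/
class WeakBrace (S : Type*) where
  add : S → S → S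
  mul : S → S → S
  neg : S → S
  inv : S → S
  add_assoc : ∀ a b c : S, add (add a b) c = add a (add b c)
  mul_assoc : ∀ a b c : S, mul (mul a b) c = mul a (mul b c)
  add_reg : ∀ a : S, add (add a (neg a)) a = a
  neg_reg : ∀ a : S, add (add (neg a) a) (neg a) = neg a
  neg_unique : ∀ a x : S, add (add a x) a = a → add (add x a) x = x → x = neg a
  mul_reg : ∀ a : S, mul (mul a (inv a)) a = a
  inv_reg : ∀ a : S, mul (mul (inv a) a) (inv a) = inv a
  inv_unique : ∀ a x : S, mul (mul a x) a = a → mul (mul x a) x = x → x = inv a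
  distrib : ∀ a b c : S, mul a (add b c) = add (add (mul a b) (neg a)) (mul a c)
  link : ∀ a : S, mul a (inv a) = add (neg a) a

/-- A dual weak brace: a weak brace whose multiplicative semigroup is Clifford. -/
class DualWeakBrace (S : Type*) extends WeakBrace S where
  clifford : ∀ a : S, WeakBrace.mul a (WeakBrace.inv a) = WeakBrace.mul (WeakBrace.inv a) a

namespace WeakBrace

variable {S : Type*} [WeakBrace S]

/-- `λ_a(b) = -a + a ∘ b`. -/
def lam (a b : S) : S := add (neg a) (mul a b)

/-- `ρ_b(a) = (-a + a ∘ b)⁻ ∘ a ∘ b`. -/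
def rho (b a : S) : S := mul (mul (inv (lam a b)) a) b

/-- `a · b = -a + a ∘ b - b`. -/
def cdot (a b : S) : S := add (add (neg a) (mul a b)) (neg b)

/-- `a⁰ = a - a`. -/
def sq (a : S) : S := add a (neg a)

/-- Additive idempotent (the sets of idempotents of `+` and `∘` coincide). -/
def IsIdem (e : S) : Prop := add e e = e

/-- `[a,b]₊ = -a - b + a + b`. -/
def brkt (a b : S) : S := add (add (add (neg a) (neg b)) a) b

/-- `I` is a full inverse subsemigroup of `(S,+)`. -/
def IsFullAddSub (I : Set S) : Prop :=
  (∀ e : S, IsIdem e → e ∈ I) ∧ (∀ x ∈ I, ∀ y ∈ I, add x y ∈ I) ∧ (∀ x ∈ I, neg x ∈ I)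

/-- `I` is a normal subsemigroup of `(S,+)`. -/
def IsNormalAdd (I : Set S) : Prop :=
  IsFullAddSub I ∧ ∀ a : S, ∀ x ∈ I, add (add (neg a) x) a ∈ I

/-- `I` is a normal subsemigroup of `(S,∘)`. -/
def IsNormalMul (I : Set S) : Prop :=
  (∀ e : S, IsIdem e → e ∈ I) ∧ (∀ x ∈ I, ∀ y ∈ I, mul x y ∈ I) ∧ (∀ x ∈ I, inv x ∈ I) ∧
    ∀ a : S, ∀ x ∈ I, mul (mul (inv a) x) a ∈ I

/-- `I` is a left ideal of the weak brace `S`. -/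
def IsLeftIdeal (I : Set S) : Prop :=
  IsFullAddSub I ∧ ∀ a : S, ∀ x ∈ I, lam a x ∈ I

/-- `I` is an ideal of the weak brace `S`. -/
def IsIdeal (I : Set S) : Prop :=
  IsNormalAdd I ∧ (∀ a : S, ∀ x ∈ I, lam a x ∈ I) ∧ IsNormalMul I

/-- The socle `Soc(S)`. -/
def Soc (S : Type*) [WeakBrace S] : Set S :=
  {a | ∀ b : S, add a b = mul a b ∧ add a b = add b a}

/-- The annihilator `Ann(S)`. -/
def Ann (S : Type*) [WeakBrace S] : Set S :=
  {a | ∀ b : S, add a b = add b a ∧ add a b = mul a b ∧ mul a b = mul b a}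

/-- The congruence `a ∼_I b ⟺ a⁰ = b⁰ and -a + b ∈ I` associated to an ideal `I`. -/
def simI (I : Set S) (a b : S) : Prop := sq a = sq b ∧ add (neg a) b ∈ I

/-- Membership in the inverse subsemigroup of `(S,+)` generated by a set `X`. -/
inductive genAdd (X : Set S) : S → Prop
  | base : ∀ x ∈ X, genAdd X x
  | add : ∀ a b : S, genAdd X a → genAdd X b → genAdd X (add a b)
  | neg : ∀ a : S, genAdd X a → genAdd X (neg a)

/-- `X · Y`: the additive inverse subsemigroup generated by the elements `x · y`. -/
def cdotSet (X Y : Set S) : Set S :=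
  {s | genAdd {z | ∃ x ∈ X, ∃ y ∈ Y, z = cdot x y} s}

/-- `S^(n)` for `n ≥ 1`: `S^(1) = S`, `S^(n+1) = S^(n) · S`. -/
def Spow (S : Type*) [WeakBrace S] : ℕ → Set S
  | 0 => Set.univ
  | 1 => Set.univ
  | (n+2) => cdotSet (Spow S (n+1)) Set.univ

end WeakBrace

namespace WeakBrace

variable {S : Type*} [DualWeakBrace S]

local infixl:65 " ⊹ " => WeakBrace.add
local infixl:70 " ⊙ " => WeakBrace.mul
local prefix:100 "∸" => WeakBrace.neg
local prefix:100 "∻" => WeakBrace.inv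

/-! ### Additive inverse semigroup toolkit -/

lemma ra (a : S) : a ⊹ (∸a ⊹ a) = a := by rw [← add_assoc]; exact add_reg a

lemma rn (a : S) : ∸a ⊹ (a ⊹ ∸a) = ∸a := by rw [← add_assoc]; exact neg_reg a

lemma ra' (a c : S) : a ⊹ (∸a ⊹ (a ⊹ c)) = a ⊹ c := by
  rw [← add_assoc, ← add_assoc, add_reg]

lemma rn' (a c : S) : ∸a ⊹ (a ⊹ (∸a ⊹ c)) = ∸a ⊹ c := by
  rw [← add_assoc, ← add_assoc, neg_reg]

lemma neg_neg (a : S) : ∸(∸a) = a := (neg_unique (∸a) a (neg_reg a) (add_reg a)).symm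

lemma idem_neg {e : S} (he : IsIdem e) : ∸e = e := by
  have he' : e ⊹ e = e := he
  exact (neg_unique e e (by rw [he', he']) (by rw [he', he'])).symm

lemma idem_absorb {e : S} (he : IsIdem e) (c : S) : e ⊹ (e ⊹ c) = e ⊹ c := by
  have he' : e ⊹ e = e := he
  rw [← add_assoc, he']

lemma isIdem_sq (a : S) : IsIdem (a ⊹ ∸a) := by
  show (a ⊹ ∸a) ⊹ (a ⊹ ∸a) = a ⊹ ∸a
  rw [add_assoc, rn]

lemma isIdem_zq (a : S) : IsIdem (∸a ⊹ a) := by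
  show (∸a ⊹ a) ⊹ (∸a ⊹ a) = ∸a ⊹ a
  rw [add_assoc, ra]

lemma isIdem_add {e f : S} (he : IsIdem e) (hf : IsIdem f) : IsIdem (e ⊹ f) := by
  set x := ∸(e ⊹ f) with hx
  have P1 : (e ⊹ f) ⊹ (x ⊹ (e ⊹ f)) = e ⊹ f := by rw [← add_assoc]; exact add_reg _
  have P2 : x ⊹ ((e ⊹ f) ⊹ x) = x := by rw [← add_assoc]; exact neg_reg _
  have h3 : x ⊹ (e ⊹ (f ⊹ (x ⊹ e))) = x ⊹ e := by
    calc x ⊹ (e ⊹ (f ⊹ (x ⊹ e))) = (x ⊹ ((e ⊹ f) ⊹ x)) ⊹ e := by simp only [add_assoc]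
    _ = x ⊹ e := by rw [P2]
  have hg1 : ((e ⊹ f) ⊹ (f ⊹ (x ⊹ e))) ⊹ (e ⊹ f) = e ⊹ f := by
    calc ((e ⊹ f) ⊹ (f ⊹ (x ⊹ e))) ⊹ (e ⊹ f)
        = e ⊹ (f ⊹ (f ⊹ (x ⊹ (e ⊹ (e ⊹ f))))) := by simp only [add_assoc]
    _ = e ⊹ (f ⊹ (f ⊹ (x ⊹ (e ⊹ f)))) := by rw [idem_absorb he]
    _ = e ⊹ (f ⊹ (x ⊹ (e ⊹ f))) := by rw [idem_absorb hf]
    _ = (e ⊹ f) ⊹ (x ⊹ (e ⊹ f)) := by simp only [add_assoc]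
    _ = e ⊹ f := P1
  have hg2 : ((f ⊹ (x ⊹ e)) ⊹ (e ⊹ f)) ⊹ (f ⊹ (x ⊹ e)) = f ⊹ (x ⊹ e) := by
    calc ((f ⊹ (x ⊹ e)) ⊹ (e ⊹ f)) ⊹ (f ⊹ (x ⊹ e))
        = f ⊹ (x ⊹ (e ⊹ (e ⊹ (f ⊹ (f ⊹ (x ⊹ e)))))) := by simp only [add_assoc]
    _ = f ⊹ (x ⊹ (e ⊹ (f ⊹ (f ⊹ (x ⊹ e))))) := by rw [idem_absorb he]
    _ = f ⊹ (x ⊹ (e ⊹ (f ⊹ (x ⊹ e)))) := by rw [idem_absorb hf]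
    _ = f ⊹ (x ⊹ e) := by rw [h3]
  have hgx : f ⊹ (x ⊹ e) = x := neg_unique (e ⊹ f) _ hg1 hg2
  have hgg : (f ⊹ (x ⊹ e)) ⊹ (f ⊹ (x ⊹ e)) = f ⊹ (x ⊹ e) := by
    calc (f ⊹ (x ⊹ e)) ⊹ (f ⊹ (x ⊹ e)) = f ⊹ (x ⊹ (e ⊹ (f ⊹ (x ⊹ e)))) := by
          simp only [add_assoc]
    _ = f ⊹ (x ⊹ e) := by rw [h3]
  have hxidem : IsIdem x := by
    show x ⊹ x = x
    rw [← hgx]; exact hgg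
  have hfin : e ⊹ f = x := by
    rw [← neg_neg (e ⊹ f), ← hx]; exact idem_neg hxidem
  rw [hfin]; exact hxidem

lemma idem_comm {e f : S} (he : IsIdem e) (hf : IsIdem f) : e ⊹ f = f ⊹ e := by
  have hef := isIdem_add he hf
  have hef' : (e ⊹ f) ⊹ (e ⊹ f) = e ⊹ f := hef
  have hfe' : (f ⊹ e) ⊹ (f ⊹ e) = f ⊹ e := isIdem_add hf he
  have h1 : ((e ⊹ f) ⊹ (f ⊹ e)) ⊹ (e ⊹ f) = e ⊹ f := by
    calc ((e ⊹ f) ⊹ (f ⊹ e)) ⊹ (e ⊹ f) = e ⊹ (f ⊹ (f ⊹ (e ⊹ (e ⊹ f)))) := by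
          simp only [add_assoc]
    _ = e ⊹ (f ⊹ (f ⊹ (e ⊹ f))) := by rw [idem_absorb he]
    _ = e ⊹ (f ⊹ (e ⊹ f)) := by rw [idem_absorb hf]
    _ = (e ⊹ f) ⊹ (e ⊹ f) := by simp only [add_assoc]
    _ = e ⊹ f := hef'
  have h2 : ((f ⊹ e) ⊹ (e ⊹ f)) ⊹ (f ⊹ e) = f ⊹ e := by
    calc ((f ⊹ e) ⊹ (e ⊹ f)) ⊹ (f ⊹ e) = f ⊹ (e ⊹ (e ⊹ (f ⊹ (f ⊹ e)))) := by
          simp only [add_assoc]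
    _ = f ⊹ (e ⊹ (f ⊹ (f ⊹ e))) := by rw [idem_absorb he]
    _ = f ⊹ (e ⊹ (f ⊹ e)) := by rw [idem_absorb hf]
    _ = (f ⊹ e) ⊹ (f ⊹ e) := by simp only [add_assoc]
    _ = f ⊹ e := hfe'
  have := neg_unique (e ⊹ f) (f ⊹ e) h1 h2
  rw [this, idem_neg hef]

lemma neg_add (a b : S) : ∸(a ⊹ b) = ∸b ⊹ ∸a := by
  have c1 : ((a ⊹ b) ⊹ (∸b ⊹ ∸a)) ⊹ (a ⊹ b) = a ⊹ b := by
    calc ((a ⊹ b) ⊹ (∸b ⊹ ∸a)) ⊹ (a ⊹ b)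
        = a ⊹ (((b ⊹ ∸b) ⊹ (∸a ⊹ a)) ⊹ b) := by simp only [add_assoc]
    _ = a ⊹ (((∸a ⊹ a) ⊹ (b ⊹ ∸b)) ⊹ b) := by
          rw [idem_comm (isIdem_sq b) (isIdem_zq a)]
    _ = a ⊹ (∸a ⊹ (a ⊹ (b ⊹ (∸b ⊹ b)))) := by simp only [add_assoc]
    _ = a ⊹ (∸a ⊹ (a ⊹ b)) := by rw [ra b]
    _ = a ⊹ b := ra' a b
  have c2 : ((∸b ⊹ ∸a) ⊹ (a ⊹ b)) ⊹ (∸b ⊹ ∸a) = ∸b ⊹ ∸a := by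
    calc ((∸b ⊹ ∸a) ⊹ (a ⊹ b)) ⊹ (∸b ⊹ ∸a)
        = ∸b ⊹ (((∸a ⊹ a) ⊹ (b ⊹ ∸b)) ⊹ ∸a) := by simp only [add_assoc]
    _ = ∸b ⊹ (((b ⊹ ∸b) ⊹ (∸a ⊹ a)) ⊹ ∸a) := by
          rw [idem_comm (isIdem_zq a) (isIdem_sq b)]
    _ = ∸b ⊹ (b ⊹ (∸b ⊹ (∸a ⊹ (a ⊹ ∸a)))) := by simp only [add_assoc]
    _ = ∸b ⊹ (b ⊹ (∸b ⊹ ∸a)) := by rw [rn a]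
    _ = ∸b ⊹ ∸a := rn' b (∸a)
  exact (neg_unique _ _ c1 c2).symm

lemma hom_neg {F : S → S} (hF : ∀ x y : S, F (x ⊹ y) = F x ⊹ F y) (x : S) :
    F (∸x) = ∸(F x) := by
  refine neg_unique (F x) (F (∸x)) ?_ ?_
  · rw [← hF, ← hF, add_reg]
  · rw [← hF, ← hF, neg_reg]

end WeakBrace
namespace WeakBrace

variable {S : Type*} [DualWeakBrace S]

local infixl:65 " ⊹ " => WeakBrace.add
local infixl:70 " ⊙ " => WeakBrace.mul
local prefix:100 "∸" => WeakBrace.neg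
local prefix:100 "∻" => WeakBrace.inv

/-! ### Multiplicative inverse semigroup toolkit -/

lemma mra (a : S) : a ⊙ (∻a ⊙ a) = a := by rw [← mul_assoc]; exact mul_reg a

lemma mrn (a : S) : ∻a ⊙ (a ⊙ ∻a) = ∻a := by rw [← mul_assoc]; exact inv_reg a

lemma inv_inv (a : S) : ∻(∻a) = a := (inv_unique (∻a) a (inv_reg a) (mul_reg a)).symm

lemma minv_idem {e : S} (he : e ⊙ e = e) : ∻e = e :=
  (inv_unique e e (by rw [he, he]) (by rw [he, he])).symm

lemma midem_absorb {e : S} (he : e ⊙ e = e) (c : S) : e ⊙ (e ⊙ c) = e ⊙ c := by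
  rw [← mul_assoc, he]

lemma midem_mul {e f : S} (he : e ⊙ e = e) (hf : f ⊙ f = f) :
    (e ⊙ f) ⊙ (e ⊙ f) = e ⊙ f := by
  set x := ∻(e ⊙ f) with hx
  have P1 : (e ⊙ f) ⊙ (x ⊙ (e ⊙ f)) = e ⊙ f := by rw [← mul_assoc]; exact mul_reg _
  have P2 : x ⊙ ((e ⊙ f) ⊙ x) = x := by rw [← mul_assoc]; exact inv_reg _
  have h3 : x ⊙ (e ⊙ (f ⊙ (x ⊙ e))) = x ⊙ e := by
    calc x ⊙ (e ⊙ (f ⊙ (x ⊙ e))) = (x ⊙ ((e ⊙ f) ⊙ x)) ⊙ e := by simp only [mul_assoc]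
    _ = x ⊙ e := by rw [P2]
  have hg1 : ((e ⊙ f) ⊙ (f ⊙ (x ⊙ e))) ⊙ (e ⊙ f) = e ⊙ f := by
    calc ((e ⊙ f) ⊙ (f ⊙ (x ⊙ e))) ⊙ (e ⊙ f)
        = e ⊙ (f ⊙ (f ⊙ (x ⊙ (e ⊙ (e ⊙ f))))) := by simp only [mul_assoc]
    _ = e ⊙ (f ⊙ (f ⊙ (x ⊙ (e ⊙ f)))) := by rw [midem_absorb he]
    _ = e ⊙ (f ⊙ (x ⊙ (e ⊙ f))) := by rw [midem_absorb hf]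
    _ = (e ⊙ f) ⊙ (x ⊙ (e ⊙ f)) := by simp only [mul_assoc]
    _ = e ⊙ f := P1
  have hg2 : ((f ⊙ (x ⊙ e)) ⊙ (e ⊙ f)) ⊙ (f ⊙ (x ⊙ e)) = f ⊙ (x ⊙ e) := by
    calc ((f ⊙ (x ⊙ e)) ⊙ (e ⊙ f)) ⊙ (f ⊙ (x ⊙ e))
        = f ⊙ (x ⊙ (e ⊙ (e ⊙ (f ⊙ (f ⊙ (x ⊙ e)))))) := by simp only [mul_assoc]
    _ = f ⊙ (x ⊙ (e ⊙ (f ⊙ (f ⊙ (x ⊙ e))))) := by rw [midem_absorb he]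
    _ = f ⊙ (x ⊙ (e ⊙ (f ⊙ (x ⊙ e)))) := by rw [midem_absorb hf]
    _ = f ⊙ (x ⊙ e) := by rw [h3]
  have hgx : f ⊙ (x ⊙ e) = x := inv_unique (e ⊙ f) _ hg1 hg2
  have hgg : (f ⊙ (x ⊙ e)) ⊙ (f ⊙ (x ⊙ e)) = f ⊙ (x ⊙ e) := by
    calc (f ⊙ (x ⊙ e)) ⊙ (f ⊙ (x ⊙ e)) = f ⊙ (x ⊙ (e ⊙ (f ⊙ (x ⊙ e)))) := by
          simp only [mul_assoc]
    _ = f ⊙ (x ⊙ e) := by rw [h3]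
  have hxidem : x ⊙ x = x := by rw [← hgx]; exact hgg
  have hfin : e ⊙ f = x := by
    rw [← inv_inv (e ⊙ f), ← hx]; exact minv_idem hxidem
  rw [hfin]; exact hxidem

lemma midem_comm {e f : S} (he : e ⊙ e = e) (hf : f ⊙ f = f) : e ⊙ f = f ⊙ e := by
  have hef' : (e ⊙ f) ⊙ (e ⊙ f) = e ⊙ f := midem_mul he hf
  have hfe' : (f ⊙ e) ⊙ (f ⊙ e) = f ⊙ e := midem_mul hf he
  have h1 : ((e ⊙ f) ⊙ (f ⊙ e)) ⊙ (e ⊙ f) = e ⊙ f := by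
    calc ((e ⊙ f) ⊙ (f ⊙ e)) ⊙ (e ⊙ f) = e ⊙ (f ⊙ (f ⊙ (e ⊙ (e ⊙ f)))) := by
          simp only [mul_assoc]
    _ = e ⊙ (f ⊙ (f ⊙ (e ⊙ f))) := by rw [midem_absorb he]
    _ = e ⊙ (f ⊙ (e ⊙ f)) := by rw [midem_absorb hf]
    _ = (e ⊙ f) ⊙ (e ⊙ f) := by simp only [mul_assoc]
    _ = e ⊙ f := hef'
  have h2 : ((f ⊙ e) ⊙ (e ⊙ f)) ⊙ (f ⊙ e) = f ⊙ e := by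
    calc ((f ⊙ e) ⊙ (e ⊙ f)) ⊙ (f ⊙ e) = f ⊙ (e ⊙ (e ⊙ (f ⊙ (f ⊙ e)))) := by
          simp only [mul_assoc]
    _ = f ⊙ (e ⊙ (f ⊙ (f ⊙ e))) := by rw [midem_absorb he]
    _ = f ⊙ (e ⊙ (f ⊙ e)) := by rw [midem_absorb hf]
    _ = (f ⊙ e) ⊙ (f ⊙ e) := by simp only [mul_assoc]
    _ = f ⊙ e := hfe'
  have h4 := inv_unique (e ⊙ f) (f ⊙ e) h1 h2
  rw [h4, minv_idem hef']

lemma inv_mul (a b : S) : ∻(a ⊙ b) = ∻b ⊙ ∻a := by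
  have msq : (a ⊙ ∻a) ⊙ (a ⊙ ∻a) = a ⊙ ∻a := by
    calc (a ⊙ ∻a) ⊙ (a ⊙ ∻a) = a ⊙ (∻a ⊙ (a ⊙ ∻a)) := by simp only [mul_assoc]
    _ = a ⊙ ∻a := by rw [mrn]
  have mzq : (∻a ⊙ a) ⊙ (∻a ⊙ a) = ∻a ⊙ a := by
    calc (∻a ⊙ a) ⊙ (∻a ⊙ a) = ∻a ⊙ (a ⊙ (∻a ⊙ a)) := by simp only [mul_assoc]
    _ = ∻a ⊙ a := by rw [mra]
  have msqb : (b ⊙ ∻b) ⊙ (b ⊙ ∻b) = b ⊙ ∻b := by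
    calc (b ⊙ ∻b) ⊙ (b ⊙ ∻b) = b ⊙ (∻b ⊙ (b ⊙ ∻b)) := by simp only [mul_assoc]
    _ = b ⊙ ∻b := by rw [mrn]
  have c1 : ((a ⊙ b) ⊙ (∻b ⊙ ∻a)) ⊙ (a ⊙ b) = a ⊙ b := by
    calc ((a ⊙ b) ⊙ (∻b ⊙ ∻a)) ⊙ (a ⊙ b)
        = a ⊙ (((b ⊙ ∻b) ⊙ (∻a ⊙ a)) ⊙ b) := by simp only [mul_assoc]
    _ = a ⊙ (((∻a ⊙ a) ⊙ (b ⊙ ∻b)) ⊙ b) := by rw [midem_comm msqb mzq]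
    _ = a ⊙ (∻a ⊙ (a ⊙ (b ⊙ (∻b ⊙ b)))) := by simp only [mul_assoc]
    _ = a ⊙ (∻a ⊙ (a ⊙ b)) := by rw [mra b]
    _ = (a ⊙ (∻a ⊙ a)) ⊙ b := by simp only [mul_assoc]
    _ = a ⊙ b := by rw [mra a]
  have c2 : ((∻b ⊙ ∻a) ⊙ (a ⊙ b)) ⊙ (∻b ⊙ ∻a) = ∻b ⊙ ∻a := by
    calc ((∻b ⊙ ∻a) ⊙ (a ⊙ b)) ⊙ (∻b ⊙ ∻a)
        = ∻b ⊙ (((∻a ⊙ a) ⊙ (b ⊙ ∻b)) ⊙ ∻a) := by simp only [mul_assoc]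
    _ = ∻b ⊙ (((b ⊙ ∻b) ⊙ (∻a ⊙ a)) ⊙ ∻a) := by rw [midem_comm mzq msqb]
    _ = ∻b ⊙ (b ⊙ (∻b ⊙ (∻a ⊙ (a ⊙ ∻a)))) := by simp only [mul_assoc]
    _ = ∻b ⊙ (b ⊙ (∻b ⊙ ∻a)) := by rw [mrn a]
    _ = (∻b ⊙ (b ⊙ ∻b)) ⊙ ∻a := by simp only [mul_assoc]
    _ = ∻b ⊙ ∻a := by rw [mrn b]
  exact (inv_unique _ _ c1 c2).symm

end WeakBrace
namespace WeakBrace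

variable {S : Type*} [DualWeakBrace S]

local infixl:65 " ⊹ " => WeakBrace.add
local infixl:70 " ⊙ " => WeakBrace.mul
local prefix:100 "∸" => WeakBrace.neg
local prefix:100 "∻" => WeakBrace.inv

/-! ### Bridge lemmas -/

lemma midem_mm (a : S) : (a ⊙ ∻a) ⊙ (a ⊙ ∻a) = a ⊙ ∻a := by
  calc (a ⊙ ∻a) ⊙ (a ⊙ ∻a) = a ⊙ (∻a ⊙ (a ⊙ ∻a)) := by simp only [mul_assoc]
  _ = a ⊙ ∻a := by rw [mrn]

lemma midem_mz (a : S) : (∻a ⊙ a) ⊙ (∻a ⊙ a) = ∻a ⊙ a := by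
  calc (∻a ⊙ a) ⊙ (∻a ⊙ a) = ∻a ⊙ (a ⊙ (∻a ⊙ a)) := by simp only [mul_assoc]
  _ = ∻a ⊙ a := by rw [mra]

lemma inv_mul_self (a : S) : ∻a ⊙ a = ∸a ⊹ a := by
  rw [← DualWeakBrace.clifford]; exact link a

lemma eq_negadd {e : S} (he : e ⊙ e = e) : ∸e ⊹ e = e := by
  have h := link e
  rw [minv_idem he, he] at h
  exact h.symm

lemma midem_neg {e : S} (he : e ⊙ e = e) : ∸e = e := by
  conv_lhs => rw [← eq_negadd he]
  rw [neg_add, neg_neg, eq_negadd he]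

lemma isIdem_of_midem {e : S} (he : e ⊙ e = e) : IsIdem e := by
  show e ⊹ e = e
  calc e ⊹ e = e ⊹ (∸e ⊹ e) := by rw [eq_negadd he]
  _ = e := ra e

lemma midem_of_isIdem {e : S} (he : IsIdem e) : e ⊙ e = e := by
  have h1 : e ⊙ ∻e = e := by rw [link, idem_neg he]; exact he
  calc e ⊙ e = (e ⊙ ∻e) ⊙ (e ⊙ ∻e) := by rw [h1]
  _ = e ⊙ ∻e := midem_mm e
  _ = e := h1

lemma zq_inv (a : S) : ∸(∻a) ⊹ ∻a = ∸a ⊹ a := by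
  calc ∸(∻a) ⊹ ∻a = ∻a ⊙ ∻(∻a) := (link (∻a)).symm
  _ = ∻a ⊙ a := by rw [inv_inv]
  _ = ∸a ⊹ a := inv_mul_self a

lemma central {e : S} (he : e ⊙ e = e) (a : S) : e ⊙ a = a ⊙ e := by
  have hi : ∀ b : S, b ⊙ (e ⊙ ∻b) = ∻b ⊙ (b ⊙ e) := by
    intro b
    have h1 : ∻(b ⊙ e) = e ⊙ ∻b := by rw [inv_mul, minv_idem he]
    have hc := DualWeakBrace.clifford (b ⊙ e)
    rw [h1] at hc
    have hL : (b ⊙ e) ⊙ (e ⊙ ∻b) = b ⊙ (e ⊙ ∻b) := by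
      calc (b ⊙ e) ⊙ (e ⊙ ∻b) = b ⊙ ((e ⊙ e) ⊙ ∻b) := by simp only [mul_assoc]
      _ = b ⊙ (e ⊙ ∻b) := by rw [he]
    have hR : (e ⊙ ∻b) ⊙ (b ⊙ e) = ∻b ⊙ (b ⊙ e) := by
      calc (e ⊙ ∻b) ⊙ (b ⊙ e) = (e ⊙ (∻b ⊙ b)) ⊙ e := by simp only [mul_assoc]
      _ = ((∻b ⊙ b) ⊙ e) ⊙ e := by rw [midem_comm he (midem_mz b)]
      _ = (∻b ⊙ b) ⊙ (e ⊙ e) := by rw [mul_assoc]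
      _ = ∻b ⊙ (b ⊙ e) := by rw [he, mul_assoc]
    rw [hL, hR] at hc
    exact hc
  have hiii : ∻a ⊙ (e ⊙ a) = a ⊙ (∻a ⊙ e) := by
    have h := hi (∻a)
    rwa [inv_inv] at h
  calc e ⊙ a = e ⊙ ((a ⊙ ∻a) ⊙ a) := by rw [mul_reg]
  _ = (e ⊙ (a ⊙ ∻a)) ⊙ a := (mul_assoc _ _ _).symm
  _ = ((a ⊙ ∻a) ⊙ e) ⊙ a := by rw [midem_comm he (midem_mm a)]
  _ = a ⊙ (∻a ⊙ (e ⊙ a)) := by simp only [mul_assoc]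
  _ = a ⊙ (a ⊙ (∻a ⊙ e)) := by rw [hiii]
  _ = (a ⊙ (a ⊙ ∻a)) ⊙ e := by simp only [mul_assoc]
  _ = (a ⊙ (∻a ⊙ a)) ⊙ e := by rw [DualWeakBrace.clifford a]
  _ = a ⊙ e := by rw [mra a]

lemma zq_mul (a b : S) : ∸(a ⊙ b) ⊹ (a ⊙ b) = (∸b ⊹ b) ⊙ (∸a ⊹ a) := by
  calc ∸(a ⊙ b) ⊹ (a ⊙ b) = (a ⊙ b) ⊙ ∻(a ⊙ b) := (link _).symm
  _ = (a ⊙ b) ⊙ (∻b ⊙ ∻a) := by rw [inv_mul]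
  _ = (a ⊙ (b ⊙ ∻b)) ⊙ ∻a := by simp only [mul_assoc]
  _ = ((b ⊙ ∻b) ⊙ a) ⊙ ∻a := by rw [← central (midem_mm b) a]
  _ = (b ⊙ ∻b) ⊙ (a ⊙ ∻a) := by rw [mul_assoc]
  _ = (∸b ⊹ b) ⊙ (∸a ⊹ a) := by rw [link, link]

lemma idem_mul_absorb {g e : S} (hg : IsIdem g) (he : IsIdem e) (hge : g ⊙ e = g) :
    g ⊹ e = g := by
  have hgm : g ⊙ g = g := midem_of_isIdem hg
  have hem : e ⊙ e = e := midem_of_isIdem he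
  have heg : e ⊙ g = g := by rw [midem_comm hem hgm]; exact hge
  have hg' : g ⊹ g = g := hg
  have key : e ⊙ (g ⊹ g) = (g ⊹ e) ⊹ g := by
    rw [distrib, heg, idem_neg he]
  rw [hg', heg] at key
  have hfin : g = g ⊹ e := by
    calc g = (g ⊹ e) ⊹ g := key
    _ = g ⊹ (e ⊹ g) := by rw [add_assoc]
    _ = g ⊹ (g ⊹ e) := by rw [idem_comm he hg]
    _ = (g ⊹ g) ⊹ e := by rw [← add_assoc]
    _ = g ⊹ e := by rw [hg']
  exact hfin.symm

lemma idem_mul_absorb' {g e : S} (hg : IsIdem g) (he : IsIdem e) (hge : g ⊙ e = g) :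
    e ⊹ g = g := by
  rw [idem_comm he hg]; exact idem_mul_absorb hg he hge

lemma absorb_zq_right (a x : S) : (a ⊙ x) ⊹ (∸a ⊹ a) = a ⊙ x := by
  have hq0 : ∸(a ⊙ x) ⊹ (a ⊙ x) = (∸x ⊹ x) ⊙ (∸a ⊹ a) := zq_mul a x
  have he : IsIdem (∸a ⊹ a) := isIdem_zq a
  have hgq : IsIdem (∸(a ⊙ x) ⊹ (a ⊙ x)) := isIdem_zq _
  have habs : (∸(a ⊙ x) ⊹ (a ⊙ x)) ⊙ (∸a ⊹ a) = ∸(a ⊙ x) ⊹ (a ⊙ x) := by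
    rw [hq0, mul_assoc, midem_of_isIdem he]
  have h1 : (∸(a ⊙ x) ⊹ (a ⊙ x)) ⊹ (∸a ⊹ a) = ∸(a ⊙ x) ⊹ (a ⊙ x) :=
    idem_mul_absorb hgq he habs
  calc (a ⊙ x) ⊹ (∸a ⊹ a)
      = ((a ⊙ x) ⊹ (∸(a ⊙ x) ⊹ (a ⊙ x))) ⊹ (∸a ⊹ a) := by rw [ra]
  _ = (a ⊙ x) ⊹ ((∸(a ⊙ x) ⊹ (a ⊙ x)) ⊹ (∸a ⊹ a)) := by rw [add_assoc]
  _ = (a ⊙ x) ⊹ (∸(a ⊙ x) ⊹ (a ⊙ x)) := by rw [h1]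
  _ = a ⊙ x := ra _

lemma idem_mul_add_self {e : S} (he : IsIdem e) (x : S) : (e ⊙ x) ⊹ e = e ⊙ x := by
  have h := absorb_zq_right e x
  rwa [idem_neg he, (he : e ⊹ e = e)] at h

lemma idem_mul_hom {e : S} (he : IsIdem e) (x y : S) :
    e ⊙ (x ⊹ y) = (e ⊙ x) ⊹ (e ⊙ y) := by
  rw [distrib, idem_neg he, idem_mul_add_self he x]

lemma idem_mul_eq_add {e f : S} (he : IsIdem e) (hf : IsIdem f) : e ⊙ f = e ⊹ f := by
  have hem := midem_of_isIdem he
  have hfm := midem_of_isIdem hf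
  have hz : IsIdem (e ⊹ f) := isIdem_add he hf
  have hzm : (e ⊹ f) ⊙ (e ⊹ f) = e ⊹ f := midem_of_isIdem hz
  have hgm : (e ⊙ f) ⊙ (e ⊙ f) = e ⊙ f := midem_mul hem hfm
  have hgI : IsIdem (e ⊙ f) := isIdem_of_midem hgm
  have hgf : (e ⊙ f) ⊙ f = e ⊙ f := by rw [mul_assoc, hfm]
  have hge : (e ⊙ f) ⊙ e = e ⊙ f := by
    calc (e ⊙ f) ⊙ e = e ⊙ (f ⊙ e) := by rw [mul_assoc]
    _ = e ⊙ (e ⊙ f) := by rw [midem_comm hfm hem]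
    _ = e ⊙ f := midem_absorb hem f
  have h5 : (e ⊙ f) ⊹ f = e ⊙ f := idem_mul_absorb hgI hf hgf
  have h6 : e ⊹ (e ⊙ f) = e ⊙ f := idem_mul_absorb' hgI he hge
  have hze : (e ⊹ f) ⊙ e = e ⊹ (e ⊙ f) := by
    calc (e ⊹ f) ⊙ e = e ⊙ (e ⊹ f) := (central hem _).symm
    _ = (e ⊙ e) ⊹ (e ⊙ f) := idem_mul_hom he e f
    _ = e ⊹ (e ⊙ f) := by rw [hem]
  have hzf : (e ⊹ f) ⊙ f = (e ⊙ f) ⊹ f := by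
    calc (e ⊹ f) ⊙ f = f ⊙ (e ⊹ f) := (central hfm _).symm
    _ = (f ⊙ e) ⊹ (f ⊙ f) := idem_mul_hom hf e f
    _ = (e ⊙ f) ⊹ f := by rw [midem_comm hfm hem, hfm]
  have hexp : e ⊹ f = (e ⊹ (e ⊙ f)) ⊹ ((e ⊙ f) ⊹ f) := by
    calc e ⊹ f = (e ⊹ f) ⊙ (e ⊹ f) := hzm.symm
    _ = ((e ⊹ f) ⊙ e) ⊹ ((e ⊹ f) ⊙ f) := idem_mul_hom hz e f
    _ = (e ⊹ (e ⊙ f)) ⊹ ((e ⊙ f) ⊹ f) := by rw [hze, hzf]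
  have hfin : e ⊹ f = e ⊙ f := by
    rw [hexp, h5, add_assoc, (hgI : (e ⊙ f) ⊹ (e ⊙ f) = e ⊙ f)]
    exact h6
  exact hfin.symm

lemma nu_hom (a x y : S) :
    (a ⊙ (x ⊹ y)) ⊹ ∸a = ((a ⊙ x) ⊹ ∸a) ⊹ ((a ⊙ y) ⊹ ∸a) := by
  rw [distrib]; simp only [add_assoc]

lemma nu_neg (a x : S) : (a ⊙ ∸x) ⊹ ∸a = ∸((a ⊙ x) ⊹ ∸a) :=
  hom_neg (F := fun t => (a ⊙ t) ⊹ ∸a) (nu_hom a) x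

lemma lam_hom (a x y : S) :
    ∸a ⊹ (a ⊙ (x ⊹ y)) = (∸a ⊹ (a ⊙ x)) ⊹ (∸a ⊹ (a ⊙ y)) := by
  rw [distrib]; simp only [add_assoc]

lemma lam_neg (a x : S) : ∸a ⊹ (a ⊙ ∸x) = ∸(∸a ⊹ (a ⊙ x)) :=
  hom_neg (F := fun t => ∸a ⊹ (a ⊙ t)) (lam_hom a) x

lemma mul_neg_inv (a : S) : a ⊙ ∸(∻a) = a ⊹ a := by
  have h13 : (a ⊙ ∸(∻a)) ⊹ ∸a = a := by
    rw [nu_neg a (∻a), link, neg_reg, neg_neg]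
  have habs : (a ⊙ ∸(∻a)) ⊹ (∸a ⊹ a) = a ⊹ a := by rw [← add_assoc, h13]
  have h := absorb_zq_right a (∸(∻a))
  rw [← h]; exact habs

lemma k10 (a : S) : a = a ⊹ ((a ⊹ ∸a) ⊹ (∸a ⊹ a)) := by
  have lhs : a ⊙ (∸(∻a) ⊹ ∻a) = a := by
    rw [zq_inv, ← inv_mul_self a]; exact mra a
  have rhs : a ⊙ (∸(∻a) ⊹ ∻a) = a ⊹ ((a ⊹ ∸a) ⊹ (∸a ⊹ a)) := by
    rw [distrib, mul_neg_inv, link]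
    simp only [add_assoc]
  exact lhs.symm.trans rhs

lemma k11 (a : S) : ∸a ⊹ a = (∸a ⊹ a) ⊹ (a ⊹ ∸a) := by
  have h1 : ∸a ⊹ a = (∸a ⊹ a) ⊹ ((a ⊹ ∸a) ⊹ (∸a ⊹ a)) := by
    calc ∸a ⊹ a = ∸a ⊹ (a ⊹ ((a ⊹ ∸a) ⊹ (∸a ⊹ a))) := by rw [← k10]
    _ = (∸a ⊹ a) ⊹ ((a ⊹ ∸a) ⊹ (∸a ⊹ a)) := (add_assoc _ _ _).symm
  calc ∸a ⊹ a = (∸a ⊹ a) ⊹ ((a ⊹ ∸a) ⊹ (∸a ⊹ a)) := h1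
  _ = (∸a ⊹ a) ⊹ ((∸a ⊹ a) ⊹ (a ⊹ ∸a)) := by
        rw [idem_comm (isIdem_sq a) (isIdem_zq a)]
  _ = (∸a ⊹ a) ⊹ (a ⊹ ∸a) := idem_absorb (isIdem_zq a) _

lemma sq_eq_zq (a : S) : a ⊹ ∸a = ∸a ⊹ a := by
  have k11n := k11 (∸a)
  rw [neg_neg] at k11n
  calc a ⊹ ∸a = (a ⊹ ∸a) ⊹ (∸a ⊹ a) := k11n
  _ = (∸a ⊹ a) ⊹ (a ⊹ ∸a) := idem_comm (isIdem_sq a) (isIdem_zq a)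
  _ = ∸a ⊹ a := (k11 a).symm

lemma zq_add_self (a : S) : (∸a ⊹ a) ⊹ a = a := by
  rw [← sq_eq_zq]; exact add_reg a

lemma sq_add_mul (a b : S) : (a ⊹ ∸a) ⊹ (a ⊙ b) = a ⊙ b := by
  have hq : ∸(a ⊙ b) ⊹ (a ⊙ b) = (∸b ⊹ b) ⊙ (∸a ⊹ a) := zq_mul a b
  have hI : IsIdem (∸(a ⊙ b) ⊹ (a ⊙ b)) := isIdem_zq _
  have habs : (∸(a ⊙ b) ⊹ (a ⊙ b)) ⊙ (∸a ⊹ a) = ∸(a ⊙ b) ⊹ (a ⊙ b) := by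
    rw [hq, mul_assoc, midem_of_isIdem (isIdem_zq a)]
  have h2 : (∸a ⊹ a) ⊹ (∸(a ⊙ b) ⊹ (a ⊙ b)) = ∸(a ⊙ b) ⊹ (a ⊙ b) :=
    idem_mul_absorb' hI (isIdem_zq a) habs
  calc (a ⊹ ∸a) ⊹ (a ⊙ b) = (∸a ⊹ a) ⊹ (a ⊙ b) := by rw [sq_eq_zq]
  _ = (∸a ⊹ a) ⊹ ((∸(a ⊙ b) ⊹ (a ⊙ b)) ⊹ (a ⊙ b)) := by rw [zq_add_self]
  _ = ((∸a ⊹ a) ⊹ (∸(a ⊙ b) ⊹ (a ⊙ b))) ⊹ (a ⊙ b) := (add_assoc _ _ _).symm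
  _ = (∸(a ⊙ b) ⊹ (a ⊙ b)) ⊹ (a ⊙ b) := by rw [h2]
  _ = a ⊙ b := zq_add_self _

end WeakBrace
namespace WeakBrace

variable {S : Type*} [DualWeakBrace S]

local infixl:65 " ⊹ " => WeakBrace.add
local infixl:70 " ⊙ " => WeakBrace.mul
local prefix:100 "∸" => WeakBrace.neg
local prefix:100 "∻" => WeakBrace.inv

/-! ### e ∘ y = e + y for idempotent e -/

lemma olem (a : S) {f : S} (hf : IsIdem f) :
    (∸a ⊹ (a ⊙ f)) ⊹ ((∸a ⊹ a) ⊙ f) = ∸a ⊹ (a ⊙ f) := by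
  have hza : IsIdem (∸a ⊹ a) := isIdem_zq a
  have hp' : (∸a ⊹ a) ⊙ f = (∸a ⊹ a) ⊹ f := idem_mul_eq_add hza hf
  have hf0 : ∸f ⊹ f = f := by rw [idem_neg hf]; exact hf
  have hq0' : ∸(a ⊙ f) ⊹ (a ⊙ f) = f ⊙ (∸a ⊹ a) := by rw [zq_mul, hf0]
  have habs : (∸(a ⊙ f) ⊹ (a ⊙ f)) ⊙ f = ∸(a ⊙ f) ⊹ (a ⊙ f) := by
    rw [hq0']
    calc (f ⊙ (∸a ⊹ a)) ⊙ f = f ⊙ ((∸a ⊹ a) ⊙ f) := by rw [mul_assoc]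
    _ = f ⊙ (f ⊙ (∸a ⊹ a)) := by
          rw [midem_comm (midem_of_isIdem hza) (midem_of_isIdem hf)]
    _ = f ⊙ (∸a ⊹ a) := midem_absorb (midem_of_isIdem hf) _
  have h1 : (∸(a ⊙ f) ⊹ (a ⊙ f)) ⊹ f = ∸(a ⊙ f) ⊹ (a ⊙ f) :=
    idem_mul_absorb (isIdem_zq _) hf habs
  have hqf : (a ⊙ f) ⊹ f = a ⊙ f := by
    calc (a ⊙ f) ⊹ f = ((a ⊙ f) ⊹ (∸(a ⊙ f) ⊹ (a ⊙ f))) ⊹ f := by rw [ra]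
    _ = (a ⊙ f) ⊹ ((∸(a ⊙ f) ⊹ (a ⊙ f)) ⊹ f) := by rw [add_assoc]
    _ = (a ⊙ f) ⊹ (∸(a ⊙ f) ⊹ (a ⊙ f)) := by rw [h1]
    _ = a ⊙ f := ra _
  calc (∸a ⊹ (a ⊙ f)) ⊹ ((∸a ⊹ a) ⊙ f)
      = (∸a ⊹ (a ⊙ f)) ⊹ ((∸a ⊹ a) ⊹ f) := by rw [hp']
  _ = ∸a ⊹ (((a ⊙ f) ⊹ (∸a ⊹ a)) ⊹ f) := by simp only [add_assoc]
  _ = ∸a ⊹ ((a ⊙ f) ⊹ f) := by rw [absorb_zq_right]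
  _ = ∸a ⊹ (a ⊙ f) := by rw [hqf]

lemma lam_idem (a : S) {f : S} (hf : IsIdem f) : IsIdem (∸a ⊹ (a ⊙ f)) := by
  show (∸a ⊹ (a ⊙ f)) ⊹ (∸a ⊹ (a ⊙ f)) = ∸a ⊹ (a ⊙ f)
  rw [← lam_hom, (hf : f ⊹ f = f)]

lemma lam_idem_eq (y : S) {e : S} (he : IsIdem e) :
    ∸y ⊹ (y ⊙ e) = (∸y ⊹ y) ⊙ e := by
  have hp : IsIdem (∸y ⊹ (y ⊙ e)) := lam_idem y he
  have hp'I : IsIdem ((∸y ⊹ y) ⊙ e) :=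
    isIdem_of_midem (midem_mul (midem_of_isIdem (isIdem_zq y)) (midem_of_isIdem he))
  have hβ2 : (∸y ⊹ y) ⊹ (∸y ⊹ (y ⊙ e)) = ∸y ⊹ (y ⊙ e) := by
    calc (∸y ⊹ y) ⊹ (∸y ⊹ (y ⊙ e)) = ((∸y ⊹ y) ⊹ ∸y) ⊹ (y ⊙ e) := (add_assoc _ _ _).symm
    _ = ∸y ⊹ (y ⊙ e) := by rw [neg_reg]
  have hβ : (∸y ⊹ y) ⊙ (∸y ⊹ (y ⊙ e)) = ∸y ⊹ (y ⊙ e) := by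
    rw [idem_mul_eq_add (isIdem_zq y) hp]; exact hβ2
  have hα : ∸(∻y) ⊹ (∻y ⊙ (∸y ⊹ (y ⊙ e))) = (∸y ⊹ y) ⊙ e := by
    have hd : ∻y ⊙ (∸y ⊹ (y ⊙ e)) =
        ((∻y ⊙ ∸y) ⊹ ∸(∻y)) ⊹ (∻y ⊙ (y ⊙ e)) := distrib _ _ _
    have hny : ∻y ⊙ ∸y = ∻y ⊹ ∻y := by
      have := mul_neg_inv (∻y)
      rwa [inv_inv] at this
    have hye : ∻y ⊙ (y ⊙ e) = (∸y ⊹ y) ⊙ e := by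
      rw [← mul_assoc, inv_mul_self]
    have hfin : ∸(∻y) ⊹ (∻y ⊙ (∸y ⊹ (y ⊙ e)))
        = (∸(∻y) ⊹ ∻y) ⊹ ((∻y ⊹ ∸(∻y)) ⊹ ((∸y ⊹ y) ⊙ e)) := by
      rw [hd, hny, hye]; simp only [add_assoc]
    rw [hfin, sq_eq_zq, zq_inv, idem_absorb (isIdem_zq y)]
    -- now : (∸y ⊹ y) ⊹ ((∸y ⊹ y) ⊙ e) = (∸y ⊹ y) ⊙ e
    rw [idem_mul_eq_add (isIdem_zq y) he, ← add_assoc, (isIdem_zq y : (∸y ⊹ y) ⊹ (∸y ⊹ y) = ∸y ⊹ y)]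
  have hOp : (∸y ⊹ (y ⊙ e)) ⊹ ((∸y ⊹ y) ⊙ e) = ∸y ⊹ (y ⊙ e) := olem y he
  have hOp' := olem (∻y) hp
  -- hOp' : (∸∻y ⊹ (∻y ⊙ p)) ⊹ ((∸∻y ⊹ ∻y) ⊙ p) = ∸∻y ⊹ (∻y ⊙ p)
  rw [zq_inv] at hOp'
  rw [hα, hβ] at hOp'
  -- hOp' : ((∸y ⊹ y) ⊙ e) ⊹ (∸y ⊹ (y ⊙ e)) = (∸y ⊹ y) ⊙ e
  calc ∸y ⊹ (y ⊙ e) = (∸y ⊹ (y ⊙ e)) ⊹ ((∸y ⊹ y) ⊙ e) := hOp.symm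
  _ = ((∸y ⊹ y) ⊙ e) ⊹ (∸y ⊹ (y ⊙ e)) := idem_comm hp hp'I
  _ = (∸y ⊹ y) ⊙ e := hOp'

lemma idem_mul_left {e : S} (he : IsIdem e) (y : S) : e ⊙ y = e ⊹ y := by
  have he' : e ⊹ e = e := he
  have hv0 : ∸(e ⊙ y) ⊹ (e ⊙ y) = (∸y ⊹ y) ⊙ e := by
    rw [zq_mul, idem_neg he, he']
  have he1 : e ⊹ (e ⊙ y) = e ⊙ y := by
    have h := sq_add_mul e y
    rwa [idem_neg he, he'] at h
  have hu0 : (e ⊹ y) ⊹ ∸(e ⊹ y) = (∸y ⊹ y) ⊙ e := by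
    rw [neg_add]
    calc (e ⊹ y) ⊹ (∸y ⊹ ∸e) = e ⊹ ((y ⊹ ∸y) ⊹ ∸e) := by simp only [add_assoc]
    _ = e ⊹ ((∸y ⊹ y) ⊹ e) := by rw [sq_eq_zq, idem_neg he]
    _ = (e ⊹ (∸y ⊹ y)) ⊹ e := (add_assoc _ _ _).symm
    _ = ((∸y ⊹ y) ⊹ e) ⊹ e := by rw [idem_comm he (isIdem_zq y)]
    _ = (∸y ⊹ y) ⊹ (e ⊹ e) := add_assoc _ _ _
    _ = (∸y ⊹ y) ⊹ e := by rw [he']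
    _ = (∸y ⊹ y) ⊙ e := (idem_mul_eq_add (isIdem_zq y) he).symm
  have he0 : ∸(e ⊹ y) ⊹ (e ⊙ y) = (∸y ⊹ y) ⊙ e := by
    rw [neg_add, idem_neg he]
    calc (∸y ⊹ e) ⊹ (e ⊙ y) = ∸y ⊹ (e ⊹ (e ⊙ y)) := add_assoc _ _ _
    _ = ∸y ⊹ (e ⊙ y) := by rw [he1]
    _ = ∸y ⊹ (y ⊙ e) := by rw [central (midem_of_isIdem he) y]
    _ = (∸y ⊹ y) ⊙ e := lam_idem_eq y he
  calc e ⊙ y = (∸(e ⊙ y) ⊹ (e ⊙ y)) ⊹ (e ⊙ y) := (zq_add_self _).symm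
  _ = ((∸y ⊹ y) ⊙ e) ⊹ (e ⊙ y) := by rw [hv0]
  _ = ((e ⊹ y) ⊹ ∸(e ⊹ y)) ⊹ (e ⊙ y) := by rw [hu0]
  _ = (e ⊹ y) ⊹ (∸(e ⊹ y) ⊹ (e ⊙ y)) := add_assoc _ _ _
  _ = (e ⊹ y) ⊹ ((∸y ⊹ y) ⊙ e) := by rw [he0]
  _ = (e ⊹ y) ⊹ ((e ⊹ y) ⊹ ∸(e ⊹ y)) := by rw [hu0]
  _ = (e ⊹ y) ⊹ (∸(e ⊹ y) ⊹ (e ⊹ y)) := by rw [sq_eq_zq]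
  _ = e ⊹ y := ra _

/-! ### The key socle lemma -/

lemma soc_key {x : S} (hs : (∸(x ⊹ x) ⊹ x) ∈ Soc S) (y : S) : IsIdem (cdot x y) := by
  have hsx : ∸x ∈ Soc S := by
    have hx : ∸(x ⊹ x) ⊹ x = ∸x := by
      rw [neg_add]
      calc (∸x ⊹ ∸x) ⊹ x = ∸x ⊹ (∸x ⊹ x) := add_assoc _ _ _
      _ = ∸x ⊹ (x ⊹ ∸x) := by rw [sq_eq_zq]
      _ = ∸x := rn x
    rwa [hx] at hs
  have hmul : ∀ b : S, ∸x ⊹ b = ∸x ⊙ b := fun b => (hsx b).1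
  have hcomm : ∀ b : S, ∸x ⊹ b = b ⊹ ∸x := fun b => (hsx b).2
  have hinvx : ∻(∸x) = x := by
    have c1 : (∸x ⊹ ∻(∸x)) ⊹ ∸x = ∸x := by
      rw [hmul, link]; exact zq_add_self (∸x)
    have c2 : (∻(∸x) ⊹ ∸x) ⊹ ∻(∸x) = ∻(∸x) := by
      rw [← hcomm, hmul, link, ← zq_inv (∸x)]
      exact zq_add_self _
    have := neg_unique (∸x) (∻(∸x)) c1 c2
    rw [this, neg_neg]
  have hV1 : ∸x ⊹ (x ⊙ y) = (∸x ⊹ ∸(∸x)) ⊹ y := by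
    calc ∸x ⊹ (x ⊙ y) = ∸x ⊙ (x ⊙ y) := hmul _
    _ = ∸x ⊙ (∻(∸x) ⊙ y) := by rw [hinvx]
    _ = (∸x ⊙ ∻(∸x)) ⊙ y := (mul_assoc _ _ _).symm
    _ = (∸(∸x) ⊹ ∸x) ⊙ y := by rw [link]
    _ = (∸(∸x) ⊹ ∸x) ⊹ y := idem_mul_left (isIdem_zq (∸x)) y
    _ = (∸x ⊹ ∸(∸x)) ⊹ y := by rw [sq_eq_zq]
  have hxy : x ⊙ y = x ⊹ y := by
    calc x ⊙ y = (x ⊹ ∸x) ⊹ (x ⊙ y) := (sq_add_mul x y).symm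
    _ = x ⊹ (∸x ⊹ (x ⊙ y)) := add_assoc _ _ _
    _ = x ⊹ ((∸x ⊹ ∸(∸x)) ⊹ y) := by rw [hV1]
    _ = (x ⊹ (∸x ⊹ ∸(∸x))) ⊹ y := (add_assoc _ _ _).symm
    _ = (x ⊹ (∸x ⊹ x)) ⊹ y := by rw [neg_neg]
    _ = x ⊹ y := by rw [ra]
  have hc : cdot x y = (∸x ⊹ x) ⊹ (y ⊹ ∸y) := by
    show (∸x ⊹ (x ⊙ y)) ⊹ ∸y = (∸x ⊹ x) ⊹ (y ⊹ ∸y)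
    rw [hxy]; simp only [add_assoc]
  rw [hc]
  exact isIdem_add (isIdem_zq x) (isIdem_sq y)

end WeakBrace
open WeakBrace
theorem stmt19 {S : Type*} [DualWeakBrace S] (m : ℕ) (hm : 1 ≤ m)
    (h : ∀ x ∈ Spow S m, simI (Soc S) (add x x) x) :
    ∀ x ∈ Spow S (m + 1), IsIdem x := by
  obtain ⟨k, rfl⟩ : ∃ k, m = k + 1 := ⟨m - 1, (Nat.succ_pred_eq_of_pos hm).symm⟩
  intro x hx
  have hx' : genAdd {z | ∃ a ∈ Spow S (k + 1), ∃ y ∈ (Set.univ : Set S), z = cdot a y} x := hx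
  clear hx
  induction hx' with
  | base z hz =>
    obtain ⟨a, ha, y, -, rfl⟩ := hz
    exact soc_key (h a ha).2 y
  | add a b _ _ iha ihb => exact isIdem_add iha ihb
  | neg a _ iha =>
    rw [show WeakBrace.neg a = a from idem_neg iha]
    exact iha
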